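/- For every integer k ≥ 2, there are infinitely many positive integers n such that n = k · Z(n), i.e., the equation n/Z(n) = k has infinitely many solutions. -/

import Mathlib

/-- The m-th triangular number. -/
def T (m : ℕ) : ℕ := m * (m + 1) / 2

/-- The pseudo-Smarandache function: the least positive m with n ∣ T m. -/
noncomputable def Z (n : ℕ) : ℕ := sInf {m : ℕ | 0 < m ∧ n ∣ T m}

lemma Z_kp (k p : ℕ) (hk : 2 ≤ k) (hp : p.Prime) (hdvd : 2 * k ∣ p + 1) :
    Z (k * p) = p := by
  obtain ⟨c, hc⟩ := hdvd
  have hc0 : 0 < c := by nlinarith [hp.two_le]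
  have hTp : T p = k * (p * c) := by
    unfold T
    rw [hc]
    have : p * (2 * k * c) = 2 * (k * (p * c)) := by ring
    rw [this, Nat.mul_div_cancel_left _ (by norm_num)]
  have hmem : p ∈ {m : ℕ | 0 < m ∧ k * p ∣ T m} := by
    refine ⟨hp.pos, ?_⟩
    rw [hTp]
    exact ⟨c, by ring⟩
  have hodd : Odd p := by
    have hd : p + 1 = 2 * (k * c) := by rw [hc]; ring
    rw [Nat.odd_iff]
    omega
  -- lower bound
  have hlb : ∀ m ∈ {m : ℕ | 0 < m ∧ k * p ∣ T m}, p ≤ m := by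
    rintro m ⟨hm0, hmd⟩
    have hTdvd : p ∣ m * (m + 1) := by
      have h1 : p ∣ T m := dvd_trans (dvd_mul_left p k) hmd
      have h2 : 2 * T m = m * (m + 1) := by
        unfold T
        obtain ⟨w, hw⟩ := Nat.even_mul_succ_self m
        omega
      calc p ∣ 2 * T m := Dvd.dvd.mul_left h1 2
        _ = m * (m + 1) := h2
    rcases (hp.dvd_mul.mp hTdvd) with h | h
    · exact Nat.le_of_dvd hm0 h
    · have hm1 : p ≤ m + 1 := Nat.le_of_dvd (by omega) h
      by_contra hlt
      have hme : m = p - 1 := by omega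
      subst hme
      -- k * p ∣ T (p-1) = (p-1)*p/2, derive 2k ∣ p-1, contradiction
      obtain ⟨q, hq⟩ := hodd
      have hq2 : p - 1 = 2 * q := by omega
      have hT : T (p - 1) = q * p := by
        unfold T
        have h1 : p - 1 + 1 = p := by omega
        rw [h1, hq2]
        have : 2 * q * p = 2 * (q * p) := by ring
        rw [this, Nat.mul_div_cancel_left _ (by norm_num)]
      rw [hT] at hmd
      have hkq : k ∣ q := by
        have := (Nat.mul_dvd_mul_iff_right hp.pos).mp hmd
        exact this
      have h2k : 2 * k ∣ p - 1 := by
        rw [hq2]; exact mul_dvd_mul_left 2 hkq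
      have h2 : 2 * k ∣ 2 := by
        have hd := Nat.dvd_sub (⟨c, hc⟩ : 2 * k ∣ p + 1) h2k
        have he : (p + 1) - (p - 1) = 2 := by omega
        rwa [he] at hd
      have := Nat.le_of_dvd (by norm_num) h2
      omega
  exact le_antisymm (Nat.sInf_le hmem) (le_csInf ⟨p, hmem⟩ hlb)

theorem stmt_11 (k : ℕ) (hk : 2 ≤ k) :
    {n : ℕ | 0 < n ∧ n = k * Z n}.Infinite := by
  haveI : NeZero (2 * k) := ⟨by omega⟩
  have hS : {p : ℕ | p.Prime ∧ (p : ZMod (2 * k)) = -1}.Infinite :=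
    Nat.infinite_setOfPred_prime_and_eq_mod (by exact (isUnit_one).neg)
  have himg : ((fun p => k * p) '' {p : ℕ | p.Prime ∧ (p : ZMod (2 * k)) = -1}).Infinite :=
    hS.image (fun a _ b _ h => Nat.eq_of_mul_eq_mul_left (by omega) h)
  refine himg.mono ?_
  rintro n ⟨p, ⟨hp, hmod⟩, rfl⟩
  have hdvd : 2 * k ∣ p + 1 := by
    have : ((p + 1 : ℕ) : ZMod (2 * k)) = 0 := by push_cast [hmod]; ring
    exact (ZMod.natCast_eq_zero_iff _ _).mp this
  have hZ := Z_kp k p hk hp hdvd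
  exact ⟨Nat.mul_pos (by omega) hp.pos, by rw [hZ]⟩
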